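/- (Accuracy-ratio comparison of two models) Let D ∈ ℝ^{m×m} be diagonal with strictly positive diagonal entries, let G₁, G₂ ∈ ℝ^{m×m} satisfy G₁ᵀ D G₁ = I_m and G₂ᵀ D G₂ = I_m, and let Λ₁, Λ₂ ∈ ℝ^{m×m} be diagonal with strictly positive diagonal entries. For h ∈ ℝ^m define a(h) = G₁ᵀ D h, b(h) = G₂ᵀ D h, Acc₁(h) = a(h)ᵀ Λ₁ a(h) and Acc₂(h) = b(h)ᵀ Λ₂ b(h). Then the supremum over nonzero h ∈ ℝ^m of Acc₁(h) / Acc₂(h) equals σ₁², where σ₁ is the largest singular value of the matrix M = Λ₁^{1/2} G₁ᵀ D G₂ Λ₂^{−1/2}. -/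

import Mathlib

open scoped BigOperators
open Matrix

/-- The singular values of a real matrix `M`: the nonnegative square roots of the
eigenvalues of `MᵀM` (there are `n` of them for an `m × n` matrix, indexed by `n`). -/
noncomputable def singularValues {m n : Type*} [Fintype m] [Fintype n] [DecidableEq n]
    (M : Matrix m n ℝ) : n → ℝ :=
  fun i => Real.sqrt ((Matrix.isHermitian_conjTranspose_mul_self M).eigenvalues i)

/-- **Accuracy-ratio comparison of two models.**  With `D` diagonal positive, `G₁ᵀ D G₁ = I`,
`G₂ᵀ D G₂ = I`, `Λ₁, Λ₂` diagonal positive, `a(h) = G₁ᵀ D h`, `b(h) = G₂ᵀ D h`,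
`Acc₁(h) = a(h)ᵀ Λ₁ a(h)`, `Acc₂(h) = b(h)ᵀ Λ₂ b(h)`, the supremum over nonzero `h` of
`Acc₁(h)/Acc₂(h)` equals `σ₁²`, where `σ₁` is the largest singular value of
`M = Λ₁^{1/2} G₁ᵀ D G₂ Λ₂^{−1/2}`. -/
lemma ray_bound {m : ℕ} {A : Matrix (Fin m) (Fin m) ℝ} (hA : A.IsHermitian) {c : ℝ}
    (hc : ∀ i, hA.eigenvalues i ≤ c) (y : Fin m → ℝ) :
    y ⬝ᵥ A *ᵥ y ≤ c * (y ⬝ᵥ y) := by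
  set U : Matrix (Fin m) (Fin m) ℝ := (hA.eigenvectorUnitary : Matrix (Fin m) (Fin m) ℝ) with hU
  have hUU : U * star U = 1 := (Matrix.mem_unitaryGroup_iff).mp hA.eigenvectorUnitary.2
  have hA' : A = U * Matrix.diagonal hA.eigenvalues * star U := by
    have h := hA.spectral_theorem
    rwa [show ((RCLike.ofReal : ℝ → ℝ) ∘ hA.eigenvalues) = hA.eigenvalues from rfl] at h
  have hone : U * Matrix.diagonal (fun _ : Fin m => c) * star U
      = c • (1 : Matrix (Fin m) (Fin m) ℝ) := by
    rw [← Matrix.smul_one_eq_diagonal, Matrix.mul_smul, Matrix.smul_mul, mul_one, hUU]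
  have h2 : c • (1 : Matrix (Fin m) (Fin m) ℝ) - A
      = U * Matrix.diagonal (fun i => c - hA.eigenvalues i) * star U := by
    have : Matrix.diagonal (fun i => c - hA.eigenvalues i)
        = Matrix.diagonal (fun _ : Fin m => c) - Matrix.diagonal hA.eigenvalues := by
      rw [Matrix.diagonal_sub]
    rw [this, Matrix.mul_sub, Matrix.sub_mul, hone, ← hA']
  have hB : (c • (1 : Matrix (Fin m) (Fin m) ℝ) - A).PosSemidef := by
    rw [h2, Matrix.star_eq_conjTranspose]
    exact (Matrix.posSemidef_diagonal_iff.mpr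
      (fun i => sub_nonneg.2 (hc i))).mul_mul_conjTranspose_same U
  have h3 := hB.dotProduct_mulVec_nonneg y
  rw [star_trivial, Matrix.sub_mulVec, Matrix.smul_mulVec, Matrix.one_mulVec,
    dotProduct_sub, dotProduct_smul, smul_eq_mul] at h3
  linarith

theorem accuracy_ratio_eq_sq_largest_singular_value
    {m : ℕ} (dvec l1 l2 : Fin m → ℝ)
    (hd : ∀ i, 0 < dvec i) (hl1 : ∀ i, 0 < l1 i) (hl2 : ∀ i, 0 < l2 i)
    (G1 G2 : Matrix (Fin m) (Fin m) ℝ)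
    (hG1 : G1ᵀ * Matrix.diagonal dvec * G1 = 1)
    (hG2 : G2ᵀ * Matrix.diagonal dvec * G2 = 1)
    (M : Matrix (Fin m) (Fin m) ℝ)
    (hM : M = Matrix.diagonal (fun i => Real.sqrt (l1 i)) * G1ᵀ * Matrix.diagonal dvec *
        G2 * Matrix.diagonal (fun i => (Real.sqrt (l2 i))⁻¹))
    (σ₁ : ℝ) (hσ₁ : IsGreatest (Set.range (singularValues M)) σ₁) :
    sSup {t : ℝ | ∃ h : Fin m → ℝ, h ≠ 0 ∧
        t = ((G1ᵀ * Matrix.diagonal dvec).mulVec h ⬝ᵥ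
              (Matrix.diagonal l1).mulVec ((G1ᵀ * Matrix.diagonal dvec).mulVec h)) /
            ((G2ᵀ * Matrix.diagonal dvec).mulVec h ⬝ᵥ
              (Matrix.diagonal l2).mulVec ((G2ᵀ * Matrix.diagonal dvec).mulVec h))}
      = σ₁ ^ 2 := by
  set D := Matrix.diagonal dvec with hD
  set s1 : Fin m → ℝ := fun i => Real.sqrt (l1 i) with hs1
  set s2 : Fin m → ℝ := fun i => Real.sqrt (l2 i) with hs2
  have hs1pos : ∀ i, 0 < s1 i := fun i => Real.sqrt_pos.2 (hl1 i)
  have hs2pos : ∀ i, 0 < s2 i := fun i => Real.sqrt_pos.2 (hl2 i)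
  set A := Mᴴ * M with hA_def
  set hA : A.IsHermitian := Matrix.isHermitian_conjTranspose_mul_self M with hA_eq
  -- spectral data
  have hnn : ∀ i, 0 ≤ hA.eigenvalues i := Matrix.eigenvalues_conjTranspose_mul_self_nonneg M
  obtain ⟨j, hj⟩ := hσ₁.1
  have hσnn : 0 ≤ σ₁ := hj ▸ Real.sqrt_nonneg _
  have hj2 : hA.eigenvalues j = σ₁ ^ 2 := by
    rw [← hj]; simp only [singularValues]
    rw [Real.sq_sqrt (hnn j)]
  have hle : ∀ i, hA.eigenvalues i ≤ σ₁ ^ 2 := by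
    intro i
    have h1 : Real.sqrt (hA.eigenvalues i) ≤ σ₁ := hσ₁.2 ⟨i, rfl⟩
    have := Real.sq_sqrt (hnn i)
    nlinarith [Real.sqrt_nonneg (hA.eigenvalues i)]
  -- matrix identities
  have hG2' : G2 * (G2ᵀ * D) = 1 := mul_eq_one_comm.mp hG2
  have hrec : ∀ h : Fin m → ℝ, G2 *ᵥ ((G2ᵀ * D) *ᵥ h) = h := by
    intro h
    rw [Matrix.mulVec_mulVec, hG2', Matrix.one_mulVec]
  have hMs2 : M * Matrix.diagonal s2 = Matrix.diagonal s1 * (G1ᵀ * D * G2) := by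
    rw [hM, mul_assoc _ (Matrix.diagonal fun i => (s2 i)⁻¹) (Matrix.diagonal s2),
      Matrix.diagonal_mul_diagonal]
    have : (fun i => (s2 i)⁻¹ * s2 i) = fun _ : Fin m => (1 : ℝ) := by
      funext i; exact inv_mul_cancel₀ (hs2pos i).ne'
    rw [this, Matrix.diagonal_one, mul_one]
    simp only [mul_assoc]
  have hcore : ∀ h : Fin m → ℝ,
      M *ᵥ (Matrix.diagonal s2 *ᵥ ((G2ᵀ * D) *ᵥ h))
        = Matrix.diagonal s1 *ᵥ ((G1ᵀ * D) *ᵥ h) := by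
    intro h
    simp only [Matrix.mulVec_mulVec]
    rw [← mul_assoc M, hMs2, mul_assoc (Matrix.diagonal s1), mul_assoc (G1ᵀ * D), hG2', mul_one]
  -- numerator and denominator identities
  have hden : ∀ h : Fin m → ℝ,
      ((G2ᵀ * D) *ᵥ h) ⬝ᵥ (Matrix.diagonal l2 *ᵥ ((G2ᵀ * D) *ᵥ h))
        = (Matrix.diagonal s2 *ᵥ ((G2ᵀ * D) *ᵥ h)) ⬝ᵥ (Matrix.diagonal s2 *ᵥ ((G2ᵀ * D) *ᵥ h)) := by
    intro h
    simp only [dotProduct, Matrix.mulVec_diagonal]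
    refine Finset.sum_congr rfl fun i _ => ?_
    have hq := Real.mul_self_sqrt (hl2 i).le
    simp only [hs2]
    linear_combination (-((((G2ᵀ * D) *ᵥ h) i) ^ 2)) * hq
  have hnum : ∀ h : Fin m → ℝ,
      ((G1ᵀ * D) *ᵥ h) ⬝ᵥ (Matrix.diagonal l1 *ᵥ ((G1ᵀ * D) *ᵥ h))
        = (M *ᵥ (Matrix.diagonal s2 *ᵥ ((G2ᵀ * D) *ᵥ h))) ⬝ᵥ
          (M *ᵥ (Matrix.diagonal s2 *ᵥ ((G2ᵀ * D) *ᵥ h))) := by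
    intro h
    rw [hcore h]
    simp only [dotProduct, Matrix.mulVec_diagonal]
    refine Finset.sum_congr rfl fun i _ => ?_
    have hq := Real.mul_self_sqrt (hl1 i).le
    simp only [hs1]
    linear_combination (-((((G1ᵀ * D) *ᵥ h) i) ^ 2)) * hq
  have hAy : ∀ y : Fin m → ℝ, (M *ᵥ y) ⬝ᵥ (M *ᵥ y) = y ⬝ᵥ A *ᵥ y := by
    intro y
    rw [hA_def, Matrix.conjTranspose_eq_transpose_of_trivial, ← Matrix.mulVec_mulVec,
      Matrix.dotProduct_mulVec y, Matrix.vecMul_transpose]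
  -- nonvanishing
  have hy_ne : ∀ h : Fin m → ℝ, h ≠ 0 → Matrix.diagonal s2 *ᵥ ((G2ᵀ * D) *ᵥ h) ≠ 0 := by
    intro h hh hcon
    apply hh
    have hb : (G2ᵀ * D) *ᵥ h = 0 := by
      funext i
      have := congrFun hcon i
      simp only [Matrix.mulVec_diagonal, Pi.zero_apply] at this ⊢
      exact (mul_eq_zero.mp this).resolve_left (hs2pos i).ne'
    rw [← hrec h, hb, Matrix.mulVec_zero]
  have hself : ∀ y : Fin m → ℝ, y ≠ 0 → 0 < y ⬝ᵥ y := by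
    intro y hy
    rcases lt_or_eq_of_le (Finset.sum_nonneg fun i _ => mul_self_nonneg (y i)) with h | h
    · exact h
    · exact absurd (dotProduct_self_eq_zero.mp h.symm) hy
  -- IsGreatest of the set
  apply IsGreatest.csSup_eq
  constructor
  · -- membership: eigenvector
    set y0 : Fin m → ℝ := ⇑(hA.eigenvectorBasis j) with hy0
    have hy0ne : y0 ≠ 0 := by
      intro hcon
      apply hA.eigenvectorBasis.orthonormal.ne_zero j
      ext i
      exact congrFun hcon i
    set h0 : Fin m → ℝ := G2 *ᵥ (Matrix.diagonal (fun i => (s2 i)⁻¹) *ᵥ y0) with hh0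
    have hb0 : (G2ᵀ * D) *ᵥ h0 = Matrix.diagonal (fun i => (s2 i)⁻¹) *ᵥ y0 := by
      rw [hh0, Matrix.mulVec_mulVec, hG2, Matrix.one_mulVec]
    have hy0' : Matrix.diagonal s2 *ᵥ ((G2ᵀ * D) *ᵥ h0) = y0 := by
      rw [hb0, Matrix.mulVec_mulVec, Matrix.diagonal_mul_diagonal]
      have : (fun i => s2 i * (s2 i)⁻¹) = fun _ : Fin m => (1 : ℝ) := by
        funext i; exact mul_inv_cancel₀ (hs2pos i).ne'
      rw [this, Matrix.diagonal_one, Matrix.one_mulVec]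
    have hh0ne : h0 ≠ 0 := by
      intro hcon
      rw [hcon, Matrix.mulVec_zero, Matrix.mulVec_zero] at hy0'
      exact hy0ne hy0'.symm
    refine ⟨h0, hh0ne, ?_⟩
    rw [hnum h0, hden h0, hy0', hAy y0]
    have hev := hA.mulVec_eigenvectorBasis j
    rw [← hy0] at hev
    rw [hev, dotProduct_smul, smul_eq_mul, hj2, mul_div_assoc,
      div_self (hself y0 hy0ne).ne', mul_one]
  · rintro t ⟨h, hh, rfl⟩
    set y := Matrix.diagonal s2 *ᵥ ((G2ᵀ * D) *ᵥ h) with hy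
    have hyne := hy_ne h hh
    have hpos := hself y hyne
    rw [hnum h, hden h, hAy y, div_le_iff₀ hpos]
    calc y ⬝ᵥ A *ᵥ y ≤ σ₁ ^ 2 * (y ⬝ᵥ y) := ray_bound hA hle y
      _ = _ := by ring
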